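/- Let 1 < p < ∞. There exist constants c, C > 0, depending only on p, such that for every Lebesgue-measurable f : (0,∞) → ℝ: c · (∑_{j∈ℤ} 2^{j(1−p)} (∫_{Δ_j} |f(t)| dt)^p)^{1/p} ≤ ‖f‖_{Ces_p} ≤ C · (∑_{j∈ℤ} 2^{j(1−p)} (∫_{Δ_j} |f(t)| dt)^p)^{1/p}, as an inequality of values in [0,∞]. -/

import Mathlib

open ENNReal MeasureTheory

/-- The Cesàro norm `‖f‖_{Ces_p} = (∫_0^∞ ((1/x)∫_0^x |f(t)| dt)^p dx)^{1/p}`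
of a function on `(0,∞)`, with all integrals Lebesgue integrals. -/
noncomputable def CesNorm (p : ℝ) (f : ℝ → ℝ) : ℝ≥0∞ :=
  (∫⁻ x in Set.Ioi (0 : ℝ),
      ((ENNReal.ofReal x)⁻¹ * ∫⁻ t in Set.Ioc (0 : ℝ) x, ENNReal.ofReal |f t|) ^ p) ^ (1 / p)

/-- The block form expression
`(∑_{j∈ℤ} 2^{j(1−p)} (∫_{Δ_j} |f(t)| dt)^p)^{1/p}`, where `Δ_j = [2^j, 2^{j+1})`. -/
noncomputable def CesBlock (p : ℝ) (f : ℝ → ℝ) : ℝ≥0∞ :=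
  (∑' j : ℤ, (2 : ℝ≥0∞) ^ ((j : ℝ) * (1 - p)) *
      (∫⁻ t in Set.Ico ((2 : ℝ) ^ j) ((2 : ℝ) ^ (j + 1)), ENNReal.ofReal |f t|) ^ p) ^ (1 / p)

namespace CesAux

open Set

lemma zpow2_pos (k : ℤ) : (0:ℝ) < 2 ^ k := zpow_pos two_pos k

lemma dyadic_disjoint :
    Pairwise (Function.onFun Disjoint (fun k : ℤ => Ico ((2:ℝ)^k) ((2:ℝ)^(k+1)))) := by
  have key : ∀ k l : ℤ, k < l →
      Disjoint (Ico ((2:ℝ)^k) ((2:ℝ)^(k+1))) (Ico ((2:ℝ)^l) ((2:ℝ)^(l+1))) := by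
    intro k l h
    rw [Set.Ico_disjoint_Ico]
    refine le_trans (min_le_left _ _) (le_trans ?_ (le_max_right _ _))
    exact zpow_le_zpow_right₀ one_le_two h
  intro k l hkl
  rcases lt_or_gt_of_ne hkl with h | h
  · exact key k l h
  · exact (key l k h).symm

lemma dyadic_union : (⋃ k : ℤ, Ico ((2:ℝ)^k) ((2:ℝ)^(k+1))) = Ioi (0:ℝ) := by
  ext x
  simp only [mem_iUnion, mem_Ico, mem_Ioi]
  constructor
  · rintro ⟨k, h1, _⟩; exact lt_of_lt_of_le (zpow2_pos k) h1
  · intro hx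
    obtain ⟨n, hn⟩ := exists_mem_Ico_zpow hx _root_.one_lt_two
    exact ⟨n, hn.1, hn.2⟩

lemma nat_disjoint (m : ℤ) :
    Pairwise (Function.onFun Disjoint
      (fun i : ℕ => Ico ((2:ℝ)^(m-1-(i:ℤ))) ((2:ℝ)^((m-1-(i:ℤ))+1)))) := by
  have key : ∀ i j : ℕ, i < j →
      Disjoint (Ico ((2:ℝ)^(m-1-(i:ℤ))) ((2:ℝ)^((m-1-(i:ℤ))+1)))
        (Ico ((2:ℝ)^(m-1-(j:ℤ))) ((2:ℝ)^((m-1-(j:ℤ))+1))) := by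
    intro i j h
    rw [Set.Ico_disjoint_Ico]
    refine le_trans (min_le_right _ _) (le_trans ?_ (le_max_left _ _))
    apply zpow_le_zpow_right₀ one_le_two
    omega
  intro i j hij
  rcases lt_or_gt_of_ne hij with h | h
  · exact key i j h
  · exact (key j i h).symm

lemma nat_union (m : ℤ) :
    (⋃ i : ℕ, Ico ((2:ℝ)^(m-1-(i:ℤ))) ((2:ℝ)^((m-1-(i:ℤ))+1))) = Ioo (0:ℝ) (2^m) := by
  ext x
  simp only [mem_iUnion, mem_Ico, mem_Ioo]
  constructor
  · rintro ⟨i, h1, h2⟩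
    refine ⟨lt_of_lt_of_le (zpow2_pos _) h1, lt_of_lt_of_le h2 ?_⟩
    apply zpow_le_zpow_right₀ one_le_two
    omega
  · rintro ⟨hx0, hxm⟩
    obtain ⟨n, hn1, hn2⟩ := exists_mem_Ico_zpow hx0 _root_.one_lt_two
    have hnm : n < m := by
      have : (2:ℝ)^n < 2^m := lt_of_le_of_lt hn1 hxm
      exact (zpow_lt_zpow_iff_right₀ _root_.one_lt_two).1 this
    refine ⟨(m-1-n).toNat, ?_, ?_⟩
    · rwa [Int.toNat_of_nonneg (by omega), show m-1-(m-1-n) = n by ring]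
    · rwa [Int.toNat_of_nonneg (by omega), show m-1-(m-1-n)+1 = n+1 by ring]

lemma z_ne_top (a : ℝ) : (2:ℝ≥0∞) ^ a ≠ ⊤ := by
  simp [ENNReal.rpow_eq_top_iff]

lemma z_ne_zero (a : ℝ) : (2:ℝ≥0∞) ^ a ≠ 0 :=
  (ENNReal.rpow_pos (by norm_num) (by norm_num)).ne'

lemma z_add (a b : ℝ) : (2:ℝ≥0∞) ^ (a+b) = 2 ^ a * 2 ^ b :=
  ENNReal.rpow_add a b (by norm_num) (by norm_num)

lemma zz (a b : ℝ) (X : ℝ≥0∞) :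
    (2:ℝ≥0∞)^a * ((2:ℝ≥0∞)^b * X) = 2^(a+b) * X := by
  rw [← mul_assoc, ← z_add]

lemma ofReal_zpow2 (k : ℤ) : ENNReal.ofReal ((2:ℝ)^k) = (2:ℝ≥0∞) ^ ((k:ℝ)) := by
  rw [← Real.rpow_intCast 2 k, ← ENNReal.ofReal_rpow_of_pos two_pos]
  norm_num

lemma prod_eq {a b c d : ℝ} (X : ℝ≥0∞) (h : a + b = c + d) :
    (2:ℝ≥0∞)^a * X * 2^b = 2^c * (2^d * X) := by
  rw [mul_right_comm, ← z_add, zz, h]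

/-- weight -/
noncomputable def W (p : ℝ) (m : ℤ) : ℝ≥0∞ := (2:ℝ≥0∞) ^ ((m:ℝ) * (1-p))

noncomputable def Af (f : ℝ → ℝ) (j : ℤ) : ℝ≥0∞ :=
  ∫⁻ t in Ico ((2:ℝ)^j) ((2:ℝ)^(j+1)), ENNReal.ofReal |f t|

noncomputable def Gf (f : ℝ → ℝ) (m : ℤ) : ℝ≥0∞ :=
  ∫⁻ t in Ioc (0:ℝ) ((2:ℝ)^m), ENNReal.ofReal |f t|

noncomputable def Fx (f : ℝ → ℝ) (x : ℝ) : ℝ≥0∞ :=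
  ∫⁻ t in Ioc (0:ℝ) x, ENNReal.ofReal |f t|

lemma Fx_mono (f : ℝ → ℝ) : Monotone (Fx f) := fun _ _ h =>
  lintegral_mono_set (Ioc_subset_Ioc_right h)

lemma Fx_zpow (f : ℝ → ℝ) (m : ℤ) : Fx f ((2:ℝ)^m) = Gf f m := rfl

lemma A_le_G (f : ℝ → ℝ) (j : ℤ) : Af f j ≤ Gf f (j+1) := by
  apply lintegral_mono_set
  intro x hx
  exact ⟨lt_of_lt_of_le (zpow2_pos j) hx.1, hx.2.le⟩

lemma G_eq (f : ℝ → ℝ) (m : ℤ) : Gf f m = ∑' i : ℕ, Af f (m-1-(i:ℤ)) := by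
  have h1 : Gf f m = ∫⁻ t in Ioo (0:ℝ) ((2:ℝ)^m), ENNReal.ofReal |f t| :=
    (setLIntegral_congr Ioo_ae_eq_Ioc).symm
  rw [h1, ← nat_union m,
    lintegral_iUnion (fun _ => measurableSet_Ico) (nat_disjoint m)]
  rfl

lemma I_eq (f : ℝ → ℝ) (p : ℝ) :
    (∫⁻ x in Ioi (0:ℝ), ((ENNReal.ofReal x)⁻¹ * Fx f x) ^ p)
      = ∑' k : ℤ, ∫⁻ x in Ico ((2:ℝ)^k) ((2:ℝ)^(k+1)),
          ((ENNReal.ofReal x)⁻¹ * Fx f x) ^ p := by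
  rw [← dyadic_union, lintegral_iUnion (fun _ => measurableSet_Ico) dyadic_disjoint]

lemma volume_dyadic (k : ℤ) :
    volume (Ico ((2:ℝ)^k) ((2:ℝ)^(k+1))) = (2:ℝ≥0∞) ^ ((k:ℝ)) := by
  rw [Real.volume_Ico, show (2:ℝ)^(k+1) - 2^k = 2^k by rw [zpow_add_one₀ (by norm_num)]; ring,
    ofReal_zpow2]

lemma block_up (p : ℝ) (hp : 1 < p) (f : ℝ → ℝ) (k : ℤ) :
    (∫⁻ x in Ico ((2:ℝ)^k) ((2:ℝ)^(k+1)), ((ENNReal.ofReal x)⁻¹ * Fx f x) ^ p)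
      ≤ (2:ℝ≥0∞)^(p-1) * (W p (k+1) * Gf f (k+1) ^ p) := by
  have hp0 : (0:ℝ) < p := lt_trans one_pos hp
  have hle : ∀ x ∈ Ico ((2:ℝ)^k) ((2:ℝ)^(k+1)),
      ((ENNReal.ofReal x)⁻¹ * Fx f x) ^ p
        ≤ ((ENNReal.ofReal ((2:ℝ)^k))⁻¹ * Gf f (k+1)) ^ p := by
    intro x hx
    apply ENNReal.rpow_le_rpow _ hp0.le
    apply mul_le_mul'
    · exact ENNReal.inv_le_inv' (ENNReal.ofReal_le_ofReal hx.1)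
    · rw [← Fx_zpow]; exact Fx_mono f hx.2.le
  calc (∫⁻ x in Ico ((2:ℝ)^k) ((2:ℝ)^(k+1)), ((ENNReal.ofReal x)⁻¹ * Fx f x) ^ p)
      ≤ ∫⁻ _ in Ico ((2:ℝ)^k) ((2:ℝ)^(k+1)),
          ((ENNReal.ofReal ((2:ℝ)^k))⁻¹ * Gf f (k+1)) ^ p :=
        setLIntegral_mono' measurableSet_Ico hle
    _ = ((ENNReal.ofReal ((2:ℝ)^k))⁻¹ * Gf f (k+1)) ^ p * (2:ℝ≥0∞) ^ ((k:ℝ)) := by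
        rw [setLIntegral_const, volume_dyadic]
    _ = (2:ℝ≥0∞)^(p-1) * (W p (k+1) * Gf f (k+1) ^ p) := by
        rw [ofReal_zpow2, ← ENNReal.rpow_neg,
          ENNReal.mul_rpow_of_nonneg _ _ hp0.le, ← ENNReal.rpow_mul, W]
        exact prod_eq _ (by push_cast; ring)

lemma block_low (p : ℝ) (hp : 1 < p) (f : ℝ → ℝ) (k : ℤ) :
    (2:ℝ≥0∞)^(-p) * (W p k * Gf f k ^ p)
      ≤ ∫⁻ x in Ico ((2:ℝ)^k) ((2:ℝ)^(k+1)), ((ENNReal.ofReal x)⁻¹ * Fx f x) ^ p := by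
  have hp0 : (0:ℝ) < p := lt_trans one_pos hp
  have hle : ∀ x ∈ Ico ((2:ℝ)^k) ((2:ℝ)^(k+1)),
      ((ENNReal.ofReal ((2:ℝ)^(k+1)))⁻¹ * Gf f k) ^ p
        ≤ ((ENNReal.ofReal x)⁻¹ * Fx f x) ^ p := by
    intro x hx
    apply ENNReal.rpow_le_rpow _ hp0.le
    apply mul_le_mul'
    · exact ENNReal.inv_le_inv' (ENNReal.ofReal_le_ofReal hx.2.le)
    · rw [← Fx_zpow]; exact Fx_mono f hx.1
  calc (2:ℝ≥0∞)^(-p) * (W p k * Gf f k ^ p)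
      = ((ENNReal.ofReal ((2:ℝ)^(k+1)))⁻¹ * Gf f k) ^ p * (2:ℝ≥0∞) ^ ((k:ℝ)) := by
        rw [ofReal_zpow2, ← ENNReal.rpow_neg,
          ENNReal.mul_rpow_of_nonneg _ _ hp0.le, ← ENNReal.rpow_mul, W]
        exact (prod_eq _ (by push_cast; ring)).symm
    _ = ∫⁻ _ in Ico ((2:ℝ)^k) ((2:ℝ)^(k+1)),
          ((ENNReal.ofReal ((2:ℝ)^(k+1)))⁻¹ * Gf f k) ^ p := by
        rw [setLIntegral_const, volume_dyadic]
    _ ≤ _ := setLIntegral_mono' measurableSet_Ico hle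



lemma tsum_holder {p q : ℝ} (hpq : p.HolderConjugate q) (u v : ℕ → ℝ≥0∞) :
    ∑' i, u i * v i ≤ (∑' i, u i ^ p) ^ (1/p) * (∑' i, v i ^ q) ^ (1/q) := by
  have h := ENNReal.lintegral_mul_le_Lp_mul_Lq Measure.count hpq
    (measurable_of_countable u).aemeasurable (measurable_of_countable v).aemeasurable
  simpa [MeasureTheory.lintegral_count] using h

lemma geo_ne_top {c : ℝ} (hc : c < 0) : (∑' i:ℕ, ((2:ℝ≥0∞)^c)^i) ≠ ⊤ := by
  rw [ENNReal.tsum_geometric]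
  have h1 : (2:ℝ≥0∞)^c < 1 :=
    ENNReal.rpow_lt_one_of_one_lt_of_neg one_lt_two hc
  refine ENNReal.inv_ne_top.2 ?_
  rw [Ne, tsub_eq_zero_iff_le]
  exact h1.not_ge

noncomputable def epsP (p : ℝ) : ℝ := (p-1)/(2*p)
noncomputable def qP (p : ℝ) : ℝ := p/(p-1)
noncomputable def CqP (p : ℝ) : ℝ≥0∞ :=
  (∑' i:ℕ, ((2:ℝ≥0∞)^(-(epsP p * qP p)))^i) ^ ((1/qP p)*p)
noncomputable def KP (p : ℝ) : ℝ≥0∞ :=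
  ∑' i:ℕ, ((2:ℝ≥0∞)^((1-p) + epsP p * p))^i
noncomputable def CC (p : ℝ) : ℝ≥0∞ := CqP p * ((2:ℝ≥0∞)^(1-p) * KP p)

lemma conj (p : ℝ) (hp : 1 < p) : p.HolderConjugate (qP p) :=
  (Real.holderConjugate_iff_eq_conjExponent hp).2 rfl

lemma eps_pos {p : ℝ} (hp : 1 < p) : 0 < epsP p :=
  div_pos (by linarith) (by linarith)

lemma q_pos {p : ℝ} (hp : 1 < p) : 0 < qP p :=
  div_pos (by linarith) (by linarith)

lemma eps_lt {p : ℝ} (hp : 1 < p) : (1-p) + epsP p * p < 0 := by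
  have hp0 : (0:ℝ) < p := by linarith
  have : epsP p * p = (p-1)/2 := by
    rw [epsP]; field_simp
  rw [this]; linarith

lemma CC_ne_top {p : ℝ} (hp : 1 < p) : CC p ≠ ⊤ := by
  have h1 : CqP p ≠ ⊤ := by
    apply (ENNReal.rpow_lt_top_of_nonneg ?_ ?_).ne
    · exact mul_nonneg (one_div_nonneg.2 (q_pos hp).le) (by linarith)
    · exact geo_ne_top (by nlinarith [eps_pos hp, q_pos hp])
  have h2 : KP p ≠ ⊤ := geo_ne_top (eps_lt hp)
  exact ENNReal.mul_ne_top h1 (ENNReal.mul_ne_top (z_ne_top _) h2)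


lemma hardy (p : ℝ) (hp : 1 < p) (f : ℝ → ℝ) :
    ∑' m:ℤ, W p m * Gf f m ^ p ≤ CC p * ∑' j:ℤ, W p j * Af f j ^ p := by
  have hp0 : (0:ℝ) < p := lt_trans one_pos hp
  set ε := epsP p with hε
  set q := qP p with hq
  have hconj : p.HolderConjugate q := conj p hp
  set B := ∑' j:ℤ, W p j * Af f j ^ p with hB
  have key : ∀ m:ℤ, W p m * Gf f m ^ p
      ≤ CqP p * ∑' i:ℕ, (2:ℝ≥0∞)^((i:ℝ)*(ε*p)) * (W p m * Af f (m-1-(i:ℤ)) ^ p) := by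
    intro m
    have hGm : Gf f m = ∑' i:ℕ,
        ((2:ℝ≥0∞)^((i:ℝ)*ε) * Af f (m-1-(i:ℤ))) * (2:ℝ≥0∞)^(-((i:ℝ)*ε)) := by
      rw [G_eq]
      refine tsum_congr fun i => ?_
      rw [mul_right_comm, ← z_add, show (i:ℝ)*ε + -((i:ℝ)*ε) = 0 by ring,
        ENNReal.rpow_zero, one_mul]
    have hH : Gf f m ≤ (∑' i:ℕ, ((2:ℝ≥0∞)^((i:ℝ)*ε) * Af f (m-1-(i:ℤ)))^p)^(1/p)
        * (∑' i:ℕ, ((2:ℝ≥0∞)^(-((i:ℝ)*ε)))^q)^(1/q) := by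
      rw [hGm]; exact tsum_holder hconj _ _
    have hv : (∑' i:ℕ, ((2:ℝ≥0∞)^(-((i:ℝ)*ε)))^q) = ∑' i:ℕ, ((2:ℝ≥0∞)^(-(ε*q)))^i := by
      refine tsum_congr fun i => ?_
      rw [← ENNReal.rpow_natCast ((2:ℝ≥0∞)^(-(ε*q))) i, ← ENNReal.rpow_mul,
        ← ENNReal.rpow_mul]
      congr 1; ring
    rw [hv] at hH
    have hGp : Gf f m ^ p ≤ (∑' i:ℕ, ((2:ℝ≥0∞)^((i:ℝ)*ε) * Af f (m-1-(i:ℤ)))^p) * CqP p := by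
      calc Gf f m ^ p
          ≤ ((∑' i:ℕ, ((2:ℝ≥0∞)^((i:ℝ)*ε) * Af f (m-1-(i:ℤ)))^p)^(1/p)
              * (∑' i:ℕ, ((2:ℝ≥0∞)^(-(ε*q)))^i)^(1/q))^p :=
            ENNReal.rpow_le_rpow hH hp0.le
        _ = _ := by
            rw [ENNReal.mul_rpow_of_nonneg _ _ hp0.le, ← ENNReal.rpow_mul,
              ← ENNReal.rpow_mul, one_div_mul_cancel hp0.ne', ENNReal.rpow_one, CqP]
    calc W p m * Gf f m ^ p
        ≤ W p m * ((∑' i:ℕ, ((2:ℝ≥0∞)^((i:ℝ)*ε) * Af f (m-1-(i:ℤ)))^p) * CqP p) :=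
          mul_le_mul_right hGp _
      _ = CqP p * (W p m * ∑' i:ℕ, ((2:ℝ≥0∞)^((i:ℝ)*ε) * Af f (m-1-(i:ℤ)))^p) := by
          ring
      _ = CqP p * ∑' i:ℕ, W p m * ((2:ℝ≥0∞)^((i:ℝ)*ε) * Af f (m-1-(i:ℤ)))^p := by
          rw [ENNReal.tsum_mul_left]
      _ = CqP p * ∑' i:ℕ, (2:ℝ≥0∞)^((i:ℝ)*(ε*p)) * (W p m * Af f (m-1-(i:ℤ))^p) := by
          refine congrArg _ (tsum_congr fun i => ?_)
          rw [ENNReal.mul_rpow_of_nonneg _ _ hp0.le, ← ENNReal.rpow_mul,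
            show (i:ℝ)*ε*p = (i:ℝ)*(ε*p) by ring, mul_left_comm]
  calc ∑' m:ℤ, W p m * Gf f m ^ p
      ≤ ∑' m:ℤ, CqP p * ∑' i:ℕ, (2:ℝ≥0∞)^((i:ℝ)*(ε*p)) * (W p m * Af f (m-1-(i:ℤ))^p) :=
        ENNReal.tsum_le_tsum key
    _ = CqP p * ∑' m:ℤ, ∑' i:ℕ, (2:ℝ≥0∞)^((i:ℝ)*(ε*p)) * (W p m * Af f (m-1-(i:ℤ))^p) :=
        ENNReal.tsum_mul_left
    _ = CqP p * ∑' i:ℕ, ∑' m:ℤ, (2:ℝ≥0∞)^((i:ℝ)*(ε*p)) * (W p m * Af f (m-1-(i:ℤ))^p) := by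
        rw [ENNReal.tsum_comm]
    _ = CqP p * ∑' i:ℕ, (2:ℝ≥0∞)^((1-p) + (i:ℝ)*((1-p)+ε*p)) * B := by
        refine congrArg _ (tsum_congr fun i => ?_)
        rw [ENNReal.tsum_mul_left]
        have hre : ∑' m:ℤ, W p m * Af f (m-1-(i:ℤ))^p = (2:ℝ≥0∞)^((1+(i:ℝ))*(1-p)) * B := by
          rw [← (Equiv.addRight ((1:ℤ)+(i:ℤ))).tsum_eq
            (fun m => W p m * Af f (m-1-(i:ℤ))^p)]
          simp only [Equiv.coe_addRight]
          rw [hB, ← ENNReal.tsum_mul_left]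
          refine tsum_congr fun j => ?_
          rw [show j + (1+(i:ℤ)) - 1 - (i:ℤ) = j by ring, ← mul_assoc]
          congr 1
          rw [W, W, ← z_add]
          congr 1
          push_cast; ring
        rw [hre, zz]
        congr 1; ring
    _ = CqP p * ((2:ℝ≥0∞)^(1-p) * KP p * B) := by
        refine congrArg _ ?_
        rw [ENNReal.tsum_mul_right]
        congr 1
        rw [KP, ← ENNReal.tsum_mul_left]
        refine tsum_congr fun i => ?_
        rw [← ENNReal.rpow_natCast ((2:ℝ≥0∞)^((1-p) + ε*p)) i, ← ENNReal.rpow_mul, ← z_add]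
        congr 1; ring
    _ = CC p * B := by rw [CC]; ring

lemma upper_sum (p : ℝ) (hp : 1 < p) (f : ℝ → ℝ) :
    (∫⁻ x in Ioi (0:ℝ), ((ENNReal.ofReal x)⁻¹ * Fx f x) ^ p)
      ≤ (2:ℝ≥0∞)^(p-1) * ∑' m:ℤ, W p m * Gf f m ^ p := by
  rw [I_eq]
  calc ∑' k:ℤ, ∫⁻ x in Ico ((2:ℝ)^k) ((2:ℝ)^(k+1)), ((ENNReal.ofReal x)⁻¹ * Fx f x) ^ p
      ≤ ∑' k:ℤ, (2:ℝ≥0∞)^(p-1) * (W p (k+1) * Gf f (k+1) ^ p) :=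
        ENNReal.tsum_le_tsum (block_up p hp f)
    _ = (2:ℝ≥0∞)^(p-1) * ∑' k:ℤ, W p (k+1) * Gf f (k+1) ^ p := ENNReal.tsum_mul_left
    _ = (2:ℝ≥0∞)^(p-1) * ∑' m:ℤ, W p m * Gf f m ^ p :=
        congrArg _ ((Equiv.addRight (1:ℤ)).tsum_eq fun m => W p m * Gf f m ^ p)

lemma lower_sum (p : ℝ) (hp : 1 < p) (f : ℝ → ℝ) :
    (2:ℝ≥0∞)^(-p) * ∑' m:ℤ, W p m * Gf f m ^ p
      ≤ ∫⁻ x in Ioi (0:ℝ), ((ENNReal.ofReal x)⁻¹ * Fx f x) ^ p := by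
  rw [I_eq, ← ENNReal.tsum_mul_left]
  exact ENNReal.tsum_le_tsum (block_low p hp f)

lemma B_le (p : ℝ) (hp : 1 < p) (f : ℝ → ℝ) :
    (∑' j:ℤ, W p j * Af f j ^ p) ≤ (2:ℝ≥0∞)^(p-1) * ∑' m:ℤ, W p m * Gf f m ^ p := by
  have hp0 : (0:ℝ) < p := lt_trans one_pos hp
  calc ∑' j:ℤ, W p j * Af f j ^ p
      ≤ ∑' j:ℤ, (2:ℝ≥0∞)^(p-1) * (W p (j+1) * Gf f (j+1) ^ p) := by
        refine ENNReal.tsum_le_tsum fun j => ?_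
        have h1 : Af f j ^ p ≤ Gf f (j+1) ^ p :=
          ENNReal.rpow_le_rpow (A_le_G f j) hp0.le
        have h2 : W p j = (2:ℝ≥0∞)^(p-1) * W p (j+1) := by
          rw [W, W, ← z_add]
          congr 1; push_cast; ring
        calc W p j * Af f j ^ p
            = (2:ℝ≥0∞)^(p-1) * (W p (j+1) * Af f j ^ p) := by rw [h2, mul_assoc]
          _ ≤ (2:ℝ≥0∞)^(p-1) * (W p (j+1) * Gf f (j+1) ^ p) :=
            mul_le_mul_right (mul_le_mul_right h1 _) _
    _ = (2:ℝ≥0∞)^(p-1) * ∑' j:ℤ, W p (j+1) * Gf f (j+1) ^ p := ENNReal.tsum_mul_left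
    _ = (2:ℝ≥0∞)^(p-1) * ∑' m:ℤ, W p m * Gf f m ^ p :=
        congrArg _ ((Equiv.addRight (1:ℤ)).tsum_eq fun m => W p m * Gf f m ^ p)

end CesAux

open CesAux Set

/-- Block form representation of `Ces_p`. -/
theorem stmt_3 (p : ℝ) (hp : 1 < p) :
    ∃ c C : ℝ, 0 < c ∧ 0 < C ∧ ∀ f : ℝ → ℝ, Measurable f →
      ENNReal.ofReal c * CesBlock p f ≤ CesNorm p f ∧
        CesNorm p f ≤ ENNReal.ofReal C * CesBlock p f := by
  have hp0 : (0:ℝ) < p := lt_trans one_pos hp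
  have hp1 : (0:ℝ) < 1/p := by positivity
  refine ⟨(2:ℝ)^((1-2*p)/p), (((2:ℝ≥0∞)^(p-1) * CC p) ^ (1/p)).toReal + 1,
    Real.rpow_pos_of_pos two_pos _,
    add_pos_of_nonneg_of_pos ENNReal.toReal_nonneg one_pos, ?_⟩
  intro f hf
  have hces : CesNorm p f
      = (∫⁻ x in Ioi (0:ℝ), ((ENNReal.ofReal x)⁻¹ * Fx f x) ^ p) ^ (1/p) := rfl
  have hblock : CesBlock p f = (∑' j:ℤ, W p j * Af f j ^ p) ^ (1/p) := rfl
  set I := ∫⁻ x in Ioi (0:ℝ), ((ENNReal.ofReal x)⁻¹ * Fx f x) ^ p with hI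
  set T := ∑' m:ℤ, W p m * Gf f m ^ p with hT
  set B := ∑' j:ℤ, W p j * Af f j ^ p with hBdef
  constructor
  · have h1 : (2:ℝ≥0∞)^(1-2*p) * B ≤ I := by
      calc (2:ℝ≥0∞)^(1-2*p) * B
          ≤ (2:ℝ≥0∞)^(1-2*p) * ((2:ℝ≥0∞)^(p-1) * T) :=
            mul_le_mul_right (B_le p hp f) _
        _ = (2:ℝ≥0∞)^(-p) * T := by rw [zz, show 1-2*p+(p-1) = -p by ring]
        _ ≤ I := lower_sum p hp f
    have hofc : ENNReal.ofReal ((2:ℝ)^((1-2*p)/p)) = (2:ℝ≥0∞)^((1-2*p)/p) := by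
      rw [← ENNReal.ofReal_rpow_of_pos two_pos]
      norm_num
    rw [hces, hblock, hofc]
    calc (2:ℝ≥0∞)^((1-2*p)/p) * B ^ (1/p)
        = ((2:ℝ≥0∞)^(1-2*p) * B) ^ (1/p) := by
          rw [ENNReal.mul_rpow_of_nonneg _ _ hp1.le, ← ENNReal.rpow_mul,
            show (1-2*p)*(1/p) = (1-2*p)/p by ring]
      _ ≤ I ^ (1/p) := ENNReal.rpow_le_rpow h1 hp1.le
  · have h2 : I ≤ ((2:ℝ≥0∞)^(p-1) * CC p) * B := by
      calc I ≤ (2:ℝ≥0∞)^(p-1) * T := upper_sum p hp f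
        _ ≤ (2:ℝ≥0∞)^(p-1) * (CC p * B) := mul_le_mul_right (hardy p hp f) _
        _ = ((2:ℝ≥0∞)^(p-1) * CC p) * B := by rw [mul_assoc]
    have hMne : ((2:ℝ≥0∞)^(p-1) * CC p) ^ (1/p) ≠ ⊤ :=
      (ENNReal.rpow_lt_top_of_nonneg hp1.le
        (ENNReal.mul_ne_top (z_ne_top _) (CC_ne_top hp))).ne
    rw [hces, hblock]
    calc I ^ (1/p) ≤ (((2:ℝ≥0∞)^(p-1) * CC p) * B) ^ (1/p) :=
          ENNReal.rpow_le_rpow h2 hp1.le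
      _ = ((2:ℝ≥0∞)^(p-1) * CC p) ^ (1/p) * B ^ (1/p) :=
          ENNReal.mul_rpow_of_nonneg _ _ hp1.le
      _ ≤ ENNReal.ofReal ((((2:ℝ≥0∞)^(p-1) * CC p) ^ (1/p)).toReal + 1) * B ^ (1/p) := by
          refine mul_le_mul_left ?_ _
          conv_lhs => rw [← ENNReal.ofReal_toReal hMne]
          exact ENNReal.ofReal_le_ofReal (by linarith)
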